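/- Let p be a prime, R a commutative ring of characteristic p, k ∈ ℕ, and B = MvPolynomial (Fin k) R. For an R-derivation D of B, define the R-linear endomorphism L(D) of B by L(D)(f) = Σ_i (D X_i)^p * D_{p·e_i}(f), where e_i is the indicator function of i. Then the lift L is compatible with the Lie bracket: for all R-derivations D, D' of B, L applied to the commutator derivation [D, D'] = D∘D' − D'∘D equals the commutator of endomorphisms [L(D), L(D')] = L(D)∘L(D') − L(D')∘L(D). -/

import Mathlib

/-- The divided-power operator `D_n` on `MvPolynomial σ R`, determined on monomials by
`D_n (X ^ m) = (∏ i, Nat.choose (m i) (n i)) • X ^ (m - n)` (componentwise truncated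
subtraction). -/
noncomputable def dpOp (R : Type*) [CommRing R] (σ : Type*) [Fintype σ] (n : σ →₀ ℕ) :
    MvPolynomial σ R →ₗ[R] MvPolynomial σ R :=
  (Finsupp.lsum ℕ fun m : σ →₀ ℕ =>
    (∏ i, Nat.choose (m i) (n i)) • (MvPolynomial.monomial (m - n) : R →ₗ[R] MvPolynomial σ R))
    ∘ₗ (AddMonoidAlgebra.coeffLinearEquiv R).toLinearMap

/-- The lift `L(D) = ∑ i, (D X_i)^p • D_(p·e_i)` of a derivation `D` of
`MvPolynomial (Fin k) R` to an operator of order `≤ p`. -/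
noncomputable def dLift (p : ℕ) {R : Type*} [CommRing R] {k : ℕ}
    (D : Derivation R (MvPolynomial (Fin k) R) (MvPolynomial (Fin k) R)) :
    MvPolynomial (Fin k) R →ₗ[R] MvPolynomial (Fin k) R :=
  ∑ i, (D (MvPolynomial.X i)) ^ p • dpOp R (Fin k) (p • Finsupp.single i 1)

open MvPolynomial

section Aux

variable {R : Type*} [CommRing R] {σ : Type*} [Fintype σ] [DecidableEq σ]

lemma dpOp_monomial (n m : σ →₀ ℕ) (c : R) :
    dpOp R σ n (monomial m c) = (∏ i, (m i).choose (n i)) • monomial (m - n) c := by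
  rw [dpOp, LinearMap.comp_apply, LinearEquiv.coe_coe,
    show (AddMonoidAlgebra.coeffLinearEquiv R) (monomial m c) = Finsupp.single m c from rfl]
  exact (Finsupp.lsum_single _ _ _ _).trans rfl

lemma smul_single_one (p : ℕ) (i : σ) : (p • Finsupp.single i 1 : σ →₀ ℕ) = Finsupp.single i p := by
  rw [Finsupp.smul_single, smul_eq_mul, mul_one]

lemma dpOp_single_monomial (p : ℕ) (hp : 0 < p) (i : σ) (m : σ →₀ ℕ) (c : R) :
    dpOp R σ (Finsupp.single i p) (monomial m c)
      = (m i).choose p • monomial (m - Finsupp.single i p) c := by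
  rw [dpOp_monomial]
  congr 1
  rw [Finset.prod_eq_single i]
  · simp
  · intro j _ hj
    simp [Finsupp.single_apply, Ne.symm hj]
  · simp

end Aux

set_option linter.unusedSectionVars false
set_option linter.unusedVariables false

section Aux2

variable {p : ℕ} (hp : p.Prime) {R : Type*} [CommRing R] [CharP R p]
variable {σ : Type*} [Fintype σ] [DecidableEq σ]

/-- `C(n+p, p) ≡ C(n,p) + 1 (mod p)` via Lucas. -/
lemma choose_add_p_cast (hp : p.Prime) (n : ℕ) :
    ((n + p).choose p : R) = (n.choose p : R) + 1 := by
  haveI : Fact p.Prime := ⟨hp⟩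
  have h1 : (n + p).choose p ≡ n / p + 1 [MOD p] := by
    simpa [Nat.mod_self, Nat.div_self hp.pos, Nat.add_div_right n hp.pos] using
      (Choose.choose_modEq_choose_mod_mul_choose_div_nat (n := n + p) (k := p) (p := p))
  have h2 : (n / p : ℕ) ≡ n.choose p [MOD p] := by
    simpa [Nat.mod_self, Nat.div_self hp.pos] using
      (Choose.choose_modEq_choose_mod_mul_choose_div_nat (n := n) (k := p) (p := p)).symm
  have e1 := CharP.natCast_eq_natCast' R p h1
  have e2 := CharP.natCast_eq_natCast' R p h2
  push_cast at e1 e2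
  rw [e1, e2]

end Aux2

section Aux3

variable {p : ℕ} {R : Type*} [CommRing R] [CharP R p]
variable {σ : Type*} [Fintype σ] [DecidableEq σ]

/-- Fermat: `(a : R)^p = a` for natural `a`, in characteristic `p`. -/
lemma natCast_pow_p (hp : p.Prime) (a : ℕ) : (a : R) ^ p = (a : R) := by
  haveI : Fact p.Prime := ⟨hp⟩
  rw [← map_natCast (ZMod.castHom (dvd_refl p) R) a, ← map_pow, ZMod.pow_card]

/-- Key step: behaviour of `dpOp (single i p)` on `X j ^ p * f`. -/
lemma dpOp_X_pow_mul (hp : p.Prime) (i j : σ) (f : MvPolynomial σ R) :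
    dpOp R σ (Finsupp.single i p) (X j ^ p * f)
      = (if i = j then f else 0) + X j ^ p * dpOp R σ (Finsupp.single i p) f := by
  induction f using MvPolynomial.induction_on' with
  | add f g hf hg =>
    rw [mul_add, map_add, hf, hg, map_add, mul_add]
    split_ifs <;> ring
  | monomial m c =>
    have hmul : ∀ (s : σ →₀ ℕ) (a : R), X j ^ p * monomial s a = monomial (s + Finsupp.single j p) a := by
      intro s a
      rw [X_pow_eq_monomial, monomial_mul, one_mul, add_comm]
    rw [hmul, dpOp_single_monomial p hp.pos, dpOp_single_monomial p hp.pos]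
    rcases eq_or_ne i j with rfl | hij
    · rw [if_pos rfl]
      rw [Finsupp.add_apply, Finsupp.single_eq_same, add_tsub_cancel_right]
      have hcast : (((m i + p).choose p : ℕ) : R) = ((m i).choose p : R) + 1 :=
        choose_add_p_cast hp (m i)
      rw [mul_smul_comm, hmul]
      rcases le_or_gt p (m i) with h | h
      · have hidx : m - Finsupp.single i p + Finsupp.single i p = m :=
          tsub_add_cancel_of_le ((Finsupp.single_le_iff).mpr h)
        rw [hidx, ← Nat.cast_smul_eq_nsmul R, ← Nat.cast_smul_eq_nsmul R, hcast, add_smul,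
          one_smul, add_comm]
      · rw [Nat.choose_eq_zero_of_lt h, zero_smul, add_zero,
          ← Nat.cast_smul_eq_nsmul R, hcast, Nat.choose_eq_zero_of_lt h,
          Nat.cast_zero, zero_add, one_smul]
    · have h1 : (m + Finsupp.single j p) i = m i := by
        simp [Finsupp.single_apply, Ne.symm hij]
      have h2 : m + Finsupp.single j p - Finsupp.single i p
          = (m - Finsupp.single i p) + Finsupp.single j p := by
        ext t
        rcases eq_or_ne t j with rfl | htj
        · simp only [Finsupp.tsub_apply, Finsupp.add_apply, Finsupp.single_apply,
            if_pos rfl, if_neg hij]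
          omega
        · simp only [Finsupp.tsub_apply, Finsupp.add_apply, Finsupp.single_apply,
            if_neg (fun h : j = t => htj h.symm)]
          omega
      rw [if_neg hij, zero_add, h1, h2, mul_smul_comm, hmul]


/-- Twisted Leibniz rule: `dpOp (single i p)` is a derivation with respect to `p`-th powers. -/
lemma dpOp_pow_mul (hp : p.Prime) (i : σ) (f g : MvPolynomial σ R) :
    dpOp R σ (Finsupp.single i p) (f ^ p * g)
      = (pderiv i f) ^ p * g + f ^ p * dpOp R σ (Finsupp.single i p) g := by
  haveI : Fact p.Prime := ⟨hp⟩
  induction f using MvPolynomial.induction_on generalizing g with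
  | C a =>
      rw [← map_pow, pderiv_C, zero_pow hp.pos.ne', zero_mul, zero_add, C_mul', map_smul, C_mul']
  | add f f' hf hf' =>
      rw [add_pow_char, add_mul, map_add, hf, hf', map_add, add_pow_char, add_mul]
      ring
  | mul_X f j hf =>
      rw [mul_pow, mul_assoc, hf, dpOp_X_pow_mul hp, Derivation.leibniz, add_pow_char,
        smul_eq_mul, smul_eq_mul, mul_pow, mul_pow]
      rcases eq_or_ne i j with rfl | hij
      · rw [pderiv_X_self, one_pow, mul_one, if_pos rfl]
        ring
      · rw [pderiv_X_of_ne (Ne.symm hij), zero_pow hp.pos.ne', mul_zero, zero_add, if_neg hij]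
        ring

/-- `dpOp` of a pure `p`-th power. -/
lemma dpOp_pow (hp : p.Prime) (i : σ) (f : MvPolynomial σ R) :
    dpOp R σ (Finsupp.single i p) (f ^ p) = (pderiv i f) ^ p := by
  have h0 : dpOp R σ (Finsupp.single i p) 1 = 0 := by
    have : (1 : MvPolynomial σ R) = monomial 0 1 := by simp
    rw [this, dpOp_single_monomial p hp.pos]
    simp [Nat.choose_eq_zero_of_lt hp.pos]
  have := dpOp_pow_mul hp i f 1
  rw [mul_one, h0, mul_zero, add_zero, mul_one] at this
  exact this

end Aux3
section Aux4

variable {p : ℕ} {R : Type*} [CommRing R] [CharP R p]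
variable {σ : Type*} [Fintype σ] [DecidableEq σ]

lemma derivation_sum_apply (E : σ → Derivation R (MvPolynomial σ R) (MvPolynomial σ R))
    (g : MvPolynomial σ R) :
    (∑ i, E i) g = ∑ i, E i g := by
  have := map_sum (Derivation.coeFnAddMonoidHom
    (R := R) (A := MvPolynomial σ R) (M := MvPolynomial σ R)) E Finset.univ
  calc (∑ i, E i) g = (Derivation.coeFnAddMonoidHom (∑ i, E i)) g := rfl
    _ = (∑ i, (E i : MvPolynomial σ R → MvPolynomial σ R)) g := by rw [this]; rfl
    _ = ∑ i, E i g := by rw [Finset.sum_apply]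

/-- A derivation of a polynomial ring is the sum of partial derivatives weighted by its values
on the variables. -/
lemma derivation_apply_eq_sum (D : Derivation R (MvPolynomial σ R) (MvPolynomial σ R))
    (f : MvPolynomial σ R) : D f = ∑ i, D (X i) * pderiv i f := by
  have h : D = ∑ i, D (X i) • pderiv i := by
    apply MvPolynomial.derivation_ext
    intro j
    rw [derivation_sum_apply]
    rw [Finset.sum_eq_single j]
    · simp
    · intro i _ hij
      simp [Derivation.coe_smul, pderiv_X_of_ne (Ne.symm hij)]
    · simp
  conv_lhs => rw [h]
  rw [derivation_sum_apply]
  simp [smul_eq_mul]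

end Aux4

section Main

variable {p : ℕ} {R : Type*} [CommRing R] [CharP R p] {k : ℕ}

lemma dLift_apply (D : Derivation R (MvPolynomial (Fin k) R) (MvPolynomial (Fin k) R))
    (f : MvPolynomial (Fin k) R) :
    dLift p D f = ∑ i, (D (X i)) ^ p * dpOp R (Fin k) (Finsupp.single i p) f := by
  rw [dLift]
  simp only [smul_single_one, LinearMap.sum_apply, LinearMap.smul_apply, smul_eq_mul]

lemma dLift_pow_mul (hp : p.Prime)
    (D : Derivation R (MvPolynomial (Fin k) R) (MvPolynomial (Fin k) R))
    (f g : MvPolynomial (Fin k) R) :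
    dLift p D (f ^ p * g) = (D f) ^ p * g + f ^ p * dLift p D g := by
  haveI : Fact p.Prime := ⟨hp⟩
  rw [dLift_apply, dLift_apply]
  calc ∑ i, (D (X i)) ^ p * dpOp R (Fin k) (Finsupp.single i p) (f ^ p * g)
      = ∑ i, ((D (X i) * pderiv i f) ^ p * g
          + f ^ p * ((D (X i)) ^ p * dpOp R (Fin k) (Finsupp.single i p) g)) := by
        refine Finset.sum_congr rfl fun i _ => ?_
        rw [dpOp_pow_mul hp, mul_add, mul_pow]
        ring
    _ = (∑ i, (D (X i) * pderiv i f) ^ p) * g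
          + f ^ p * ∑ i, (D (X i)) ^ p * dpOp R (Fin k) (Finsupp.single i p) g := by
        rw [Finset.sum_add_distrib, Finset.sum_mul, Finset.mul_sum]
    _ = (D f) ^ p * g
          + f ^ p * ∑ i, (D (X i)) ^ p * dpOp R (Fin k) (Finsupp.single i p) g := by
        rw [← sum_pow_char, ← derivation_apply_eq_sum]

end Main

section Main2

variable {p : ℕ} {R : Type*} [CommRing R] [CharP R p] {k : ℕ}

lemma choose_symm_aux (p : ℕ) (m : Fin k →₀ ℕ) (i j : Fin k) :
    (m j).choose p * ((m - Finsupp.single j p) i).choose p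
      = (m i).choose p * ((m - Finsupp.single i p) j).choose p := by
  rcases eq_or_ne i j with rfl | h
  · rfl
  · rw [Finsupp.tsub_apply, Finsupp.tsub_apply, Finsupp.single_apply, Finsupp.single_apply,
      if_neg (fun hh : j = i => h hh.symm), if_neg h]
    simp [mul_comm]

lemma tsub_tsub_comm' (m a b : Fin k →₀ ℕ) : m - a - b = m - b - a := by
  ext t
  simp only [Finsupp.tsub_apply]
  omega

theorem dLift_bracket' (hp : p.Prime)
    (D D' : Derivation R (MvPolynomial (Fin k) R) (MvPolynomial (Fin k) R)) :
    dLift p ⁅D, D'⁆ = dLift p D ∘ₗ dLift p D' - dLift p D' ∘ₗ dLift p D := by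
  haveI : Fact p.Prime := ⟨hp⟩
  apply LinearMap.ext
  intro f
  induction f using MvPolynomial.induction_on' with
  | add f g hf hg =>
    simp only [map_add, LinearMap.sub_apply, LinearMap.comp_apply] at hf hg ⊢
    rw [hf, hg]
  | monomial m c =>
    have happ : ∀ (B : Derivation R (MvPolynomial (Fin k) R) (MvPolynomial (Fin k) R))
        (n : Fin k →₀ ℕ) (a : R), dLift p B (monomial n a)
        = ∑ j, (n j).choose p • ((B (X j)) ^ p * monomial (n - Finsupp.single j p) a) := by
      intro B n a
      rw [dLift_apply]
      exact Finset.sum_congr rfl fun j _ => by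
        rw [dpOp_single_monomial p hp.pos, mul_smul_comm]
    have key : ∀ (A B : Derivation R (MvPolynomial (Fin k) R) (MvPolynomial (Fin k) R)),
        dLift p A (dLift p B (monomial m c))
        = (∑ j, (m j).choose p • ((A (B (X j))) ^ p * monomial (m - Finsupp.single j p) c))
          + ∑ j, ∑ i, ((m j).choose p * ((m - Finsupp.single j p) i).choose p) •
              ((B (X j)) ^ p * (A (X i)) ^ p
                * monomial (m - Finsupp.single j p - Finsupp.single i p) c) := by
      intro A B
      rw [happ B, map_sum]
      have hterm : ∀ j, dLift p A
            ((m j).choose p • ((B (X j)) ^ p * monomial (m - Finsupp.single j p) c))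
          = (m j).choose p • ((A (B (X j))) ^ p * monomial (m - Finsupp.single j p) c)
            + ∑ i, ((m j).choose p * ((m - Finsupp.single j p) i).choose p) •
                ((B (X j)) ^ p * (A (X i)) ^ p
                  * monomial (m - Finsupp.single j p - Finsupp.single i p) c) := by
        intro j
        rw [map_nsmul, dLift_pow_mul hp, happ A, Finset.mul_sum, smul_add, Finset.smul_sum]
        congr 1
        refine Finset.sum_congr rfl fun i _ => ?_
        rw [mul_smul_comm, smul_smul, mul_assoc]
      rw [Finset.sum_congr rfl fun j _ => hterm j, Finset.sum_add_distrib]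
    have cross : (∑ j, ∑ i, ((m j).choose p * ((m - Finsupp.single j p) i).choose p) •
              ((D' (X j)) ^ p * (D (X i)) ^ p
                * monomial (m - Finsupp.single j p - Finsupp.single i p) c))
        = ∑ j, ∑ i, ((m j).choose p * ((m - Finsupp.single j p) i).choose p) •
              ((D (X j)) ^ p * (D' (X i)) ^ p
                * monomial (m - Finsupp.single j p - Finsupp.single i p) c) := by
      rw [Finset.sum_comm]
      refine Finset.sum_congr rfl fun j _ => Finset.sum_congr rfl fun i _ => ?_
      rw [choose_symm_aux, tsub_tsub_comm']
      ring_nf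
    rw [LinearMap.sub_apply, LinearMap.comp_apply, LinearMap.comp_apply, key D D', key D' D,
      cross, add_sub_add_right_eq_sub, happ, ← Finset.sum_sub_distrib]
    refine Finset.sum_congr rfl fun j _ => ?_
    rw [Derivation.commutator_apply, sub_pow_char, sub_mul, smul_sub]

end Main2

/-- The lift `L` is compatible with the Lie bracket:
`L ⁅D, D'⁆ = L D ∘ L D' - L D' ∘ L D`. -/
theorem dLift_bracket (p : ℕ) (hp : p.Prime) (R : Type*) [CommRing R] [CharP R p] (k : ℕ)
    (D D' : Derivation R (MvPolynomial (Fin k) R) (MvPolynomial (Fin k) R)) :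
    dLift p ⁅D, D'⁆ = dLift p D ∘ₗ dLift p D' - dLift p D' ∘ₗ dLift p D := by
  exact dLift_bracket' hp D D'
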